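/- arXiv:1705.10273 — 4 statements merged into one kernel-verified Lean document; each statement's English description precedes it below -/
import Mathlib

section
/- Inverse-distribution-function sampling of the twisted arrival epochs: let H be uniformly distributed on [0,1), and define G(H) = (1/r) log( (e^{rt} − θ*/μ)^H (1 − θ*/μ)^{1−H} + θ*/μ ). Then G(H) takes values in [0,t] and for every u ∈ [0,t], P(G(H) ≤ u) = log( (μ e^{ru} − θ*)/(μ − θ*) ) / log( (μ e^{rt} − θ*)/(μ − θ*) ). -/
open MeasureTheory

/-- **Inverse-distribution-function sampling of the twisted arrival epochs.** Let `H` be uniform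
on `[0,1)` and `G(h) = (1/r) log ((e^{rt} - θ*/μ)^h (1 - θ*/μ)^{1-h} + θ*/μ)` (real powers).
Then `G(H)` takes values in `[0,t]` and for every `u ∈ [0,t]`,
`P(G(H) ≤ u) = log((μ e^{ru} - θ*)/(μ - θ*)) / log((μ e^{rt} - θ*)/(μ - θ*))`. -/
theorem inverse_sampling_twisted_epochs
    {Ω : Type*} [MeasurableSpace Ω] (P : Measure Ω) [IsProbabilityMeasure P]
    (r t μ θs : ℝ) (hr : 0 < r) (ht : 0 < t) (hμ : 0 < μ) (hθs : 0 < θs) (hθsμ : θs < μ)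
    (H : Ω → ℝ) (hH : Measurable H)
    (hHdist : Measure.map H P = volume.restrict (Set.Ico (0 : ℝ) 1)) :
    (∀ h ∈ Set.Ico (0 : ℝ) 1,
      (1 / r) * Real.log ((Real.exp (r * t) - θs / μ) ^ h * (1 - θs / μ) ^ (1 - h) + θs / μ)
        ∈ Set.Icc 0 t) ∧
    ∀ u ∈ Set.Icc (0 : ℝ) t,
      P {ω | (1 / r) * Real.log ((Real.exp (r * t) - θs / μ) ^ (H ω)
          * (1 - θs / μ) ^ (1 - H ω) + θs / μ) ≤ u}
        = ENNReal.ofReal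
            (Real.log ((μ * Real.exp (r * u) - θs) / (μ - θs))
              / Real.log ((μ * Real.exp (r * t) - θs) / (μ - θs))) := by
  have hμ0 : (μ : ℝ) ≠ 0 := ne_of_gt hμ
  set c : ℝ := θs / μ with hcdef
  have hc0 : 0 < c := div_pos hθs hμ
  have hc1 : c < 1 := (div_lt_one hμ).mpr hθsμ
  have hb : 0 < 1 - c := by linarith
  have hexp1 : ∀ v : ℝ, 0 ≤ v → 1 ≤ Real.exp (r * v) := by
    intro v hv
    rw [← Real.exp_zero]
    exact Real.exp_le_exp.mpr (by positivity)
  have hert : 1 < Real.exp (r * t) := by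
    rw [← Real.exp_zero]
    exact Real.exp_lt_exp.mpr (by positivity)
  set a : ℝ := Real.exp (r * t) - c with hadef
  have ha : 0 < a := by rw [hadef]; linarith
  have hab : 1 < a / (1 - c) := (one_lt_div hb).mpr (by rw [hadef]; linarith)
  have hab0 : 0 < a / (1 - c) := by linarith
  have hL : 0 < Real.log (a / (1 - c)) := Real.log_pos hab
  have hprod : ∀ x : ℝ, a ^ x * (1 - c) ^ (1 - x) = (1 - c) * (a / (1 - c)) ^ x := by
    intro x
    rw [Real.rpow_sub hb, Real.rpow_one, Real.div_rpow ha.le hb.le,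
      div_eq_mul_inv, div_eq_mul_inv]
    ring
  have key : ∀ x u : ℝ, 0 ≤ u →
      ((1 / r) * Real.log (a ^ x * (1 - c) ^ (1 - x) + c) ≤ u ↔
        x ≤ Real.log ((Real.exp (r * u) - c) / (1 - c)) / Real.log (a / (1 - c))) := by
    intro x u hu
    have hxpos : 0 < a ^ x * (1 - c) ^ (1 - x) := by positivity
    have hF : 0 < a ^ x * (1 - c) ^ (1 - x) + c := by linarith
    have hy : 0 < (Real.exp (r * u) - c) / (1 - c) :=
      div_pos (by linarith [hexp1 u hu]) hb
    calc (1 / r) * Real.log (a ^ x * (1 - c) ^ (1 - x) + c) ≤ u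
        ↔ Real.log (a ^ x * (1 - c) ^ (1 - x) + c) ≤ r * u := by
          rw [one_div]; exact inv_mul_le_iff₀ hr
      _ ↔ a ^ x * (1 - c) ^ (1 - x) + c ≤ Real.exp (r * u) :=
          Real.log_le_iff_le_exp hF
      _ ↔ (1 - c) * (a / (1 - c)) ^ x ≤ Real.exp (r * u) - c := by
          rw [hprod x]; exact le_sub_iff_add_le.symm
      _ ↔ (a / (1 - c)) ^ x ≤ (Real.exp (r * u) - c) / (1 - c) :=
          (le_div_iff₀' hb).symm
      _ ↔ Real.exp (Real.log (a / (1 - c)) * x) ≤ (Real.exp (r * u) - c) / (1 - c) := by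
          rw [Real.rpow_def_of_pos hab0]
      _ ↔ Real.log (a / (1 - c)) * x ≤ Real.log ((Real.exp (r * u) - c) / (1 - c)) := by
          rw [← Real.exp_log hy, Real.exp_le_exp, Real.log_exp]
      _ ↔ x ≤ Real.log ((Real.exp (r * u) - c) / (1 - c)) / Real.log (a / (1 - c)) := by
          rw [mul_comm]; exact (le_div_iff₀ hL).symm
  constructor
  · intro h hh
    constructor
    · have hone : 1 ≤ (a / (1 - c)) ^ h := by
        have := (Real.rpow_le_rpow_left_iff hab).mpr hh.1
        rwa [Real.rpow_zero] at this
      have hF1 : 1 ≤ a ^ h * (1 - c) ^ (1 - h) + c := by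
        rw [hprod h]
        nlinarith
      have : 0 ≤ Real.log (a ^ h * (1 - c) ^ (1 - h) + c) := Real.log_nonneg hF1
      positivity
    · refine (key h t ht.le).mpr ?_
      have : Real.exp (r * t) - c = a := by rw [hadef]
      rw [this, div_self hL.ne']
      exact hh.2.le
  · intro u hu
    have hrwu : (μ * Real.exp (r * u) - θs) / (μ - θs) = (Real.exp (r * u) - c) / (1 - c) := by
      rw [hcdef]; field_simp
    have hrwt : (μ * Real.exp (r * t) - θs) / (μ - θs) = a / (1 - c) := by
      rw [hadef, hcdef]; field_simp
    rw [hrwu, hrwt]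
    set s : ℝ := Real.log ((Real.exp (r * u) - c) / (1 - c)) / Real.log (a / (1 - c)) with hsdef
    have hs0 : 0 ≤ s := by
      apply div_nonneg _ hL.le
      apply Real.log_nonneg
      rw [le_div_iff₀ hb]
      linarith [hexp1 u hu.1]
    have hs1 : s ≤ 1 := by
      rw [hsdef, div_le_one hL]
      have h1 : Real.exp (r * u) ≤ Real.exp (r * t) :=
        Real.exp_le_exp.mpr (mul_le_mul_of_nonneg_left hu.2 hr.le)
      apply Real.log_le_log (div_pos (by linarith [hexp1 u hu.1]) hb)
      rw [hadef]
      gcongr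
    have hset : {ω | (1 / r) * Real.log (a ^ (H ω) * (1 - c) ^ (1 - H ω) + c) ≤ u}
        = H ⁻¹' Set.Iic s := by
      ext ω
      simpa using key (H ω) u hu.1
    rw [hset, ← Measure.map_apply hH measurableSet_Iic, hHdist,
      Measure.restrict_apply measurableSet_Iic]
    apply le_antisymm
    · calc volume (Set.Iic s ∩ Set.Ico 0 1) ≤ volume (Set.Icc 0 s) :=
            measure_mono (fun x hx => ⟨hx.2.1, hx.1⟩)
        _ = ENNReal.ofReal s := by rw [Real.volume_Icc, sub_zero]
    · calc ENNReal.ofReal s = volume (Set.Ico 0 s) := by rw [Real.volume_Ico, sub_zero]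
        _ ≤ volume (Set.Iic s ∩ Set.Ico 0 1) :=
            measure_mono (fun x hx => ⟨hx.2.le, hx.1, lt_of_lt_of_le hx.2 hs1⟩)
end

section
/- Joint moment generating function of the two-node tandem: for all (θ_1, θ_2) for which the right-hand side's integrand is finite, E[ exp( θ_1 X^{(1)}(t) + θ_2 X^{(2)}(t) ) ] = exp( λ ∫_0^t ( β( e^{-r_1 u} θ_1 + (r_1/(r_1−r_2)) (e^{-r_2 u} − e^{-r_1 u}) θ_2 ) − 1 ) du ). -/
open MeasureTheory ProbabilityTheory
open scoped ENNReal NNReal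

noncomputable section

abbrev ShotIdx : Type := Unit ⊕ ℕ ⊕ ℕ

abbrev shotType : ShotIdx → Type := fun i => Sum.elim (fun _ => ℕ) (fun _ => ℝ) i

instance shotTypeMS : ∀ i : ShotIdx, MeasurableSpace (shotType i) := fun i =>
  match i with
  | .inl _ => (inferInstance : MeasurableSpace ℕ)
  | .inr (.inl _) => (inferInstance : MeasurableSpace ℝ)
  | .inr (.inr _) => (inferInstance : MeasurableSpace ℝ)

def shotFam {Ω : Type*} (N : Ω → ℕ) (U B : ℕ → Ω → ℝ) : ∀ i : ShotIdx, Ω → shotType i :=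
  fun i =>
  match i with
  | .inl _ => N
  | .inr (.inl j) => U j
  | .inr (.inr j) => B j

set_option maxHeartbeats 2000000 in
/-- **Joint MGF of the two-node tandem.** With `N` Poisson of mean `λ t`, the `U j` i.i.d.
uniform on `[0,t]`, the `B j` i.i.d. nonnegative with MGF `β`, all mutually independent,
`X¹(t) = ∑_{j<N} B j e^{-r₁ U j}` and
`X²(t) = ∑_{j<N} B j (r₁/(r₁-r₂)) (e^{-r₂ U j} - e^{-r₁ U j})`, one has, for all `(θ₁, θ₂)`
making the integrand on the right finite,
`E[exp(θ₁ X¹(t) + θ₂ X²(t))] = exp(λ ∫_0^t (β(e^{-r₁u}θ₁ + (r₁/(r₁-r₂))(e^{-r₂u}-e^{-r₁u})θ₂) - 1) du)`. -/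
theorem tandem_joint_mgf
    {Ω : Type*} [MeasurableSpace Ω] (P : Measure Ω) [IsProbabilityMeasure P]
    (lam t r₁ r₂ : ℝ) (hlam : 0 < lam) (ht : 0 < t) (hr₁ : 0 < r₁) (hr₂ : 0 < r₂)
    (hr : r₁ ≠ r₂)
    (N : Ω → ℕ) (U B : ℕ → Ω → ℝ)
    (hN : Measurable N) (hU : ∀ j, Measurable (U j)) (hB : ∀ j, Measurable (B j))
    (hNdist : Measure.map N P = poissonMeasure (lam * t).toNNReal)
    (hUdist : ∀ j, Measure.map (U j) P
      = (ENNReal.ofReal t)⁻¹ • volume.restrict (Set.Icc (0 : ℝ) t))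
    (hBpos : ∀ j ω, 0 ≤ B j ω)
    (hBdist : ∀ j, Measure.map (B j) P = Measure.map (B 0) P)
    (hIndep : iIndepFun (m := shotTypeMS) (shotFam N U B) P)
    (θ₁ θ₂ : ℝ)
    (hfin : ∀ u ∈ Set.Icc (0 : ℝ) t,
      Integrable (fun ω => Real.exp ((Real.exp (-(r₁ * u)) * θ₁
        + r₁ / (r₁ - r₂) * (Real.exp (-(r₂ * u)) - Real.exp (-(r₁ * u))) * θ₂) * B 0 ω)) P) :
    (∫ ω, Real.exp (θ₁ * ∑ j ∈ Finset.range (N ω), B j ω * Real.exp (-(r₁ * U j ω))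
        + θ₂ * ∑ j ∈ Finset.range (N ω), B j ω * (r₁ / (r₁ - r₂))
            * (Real.exp (-(r₂ * U j ω)) - Real.exp (-(r₁ * U j ω)))) ∂P)
      = Real.exp (lam * ∫ u in Set.Icc (0 : ℝ) t,
          (mgf (B 0) P (Real.exp (-(r₁ * u)) * θ₁
            + r₁ / (r₁ - r₂) * (Real.exp (-(r₂ * u)) - Real.exp (-(r₁ * u))) * θ₂) - 1)) := by
  classical
  -- basic notation
  set θf : ℝ → ℝ := fun u => Real.exp (-(r₁ * u)) * θ₁
      + r₁ / (r₁ - r₂) * (Real.exp (-(r₂ * u)) - Real.exp (-(r₁ * u))) * θ₂ with hθf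
  have hθc : Continuous θf := by
    apply Continuous.add
    · exact (Real.continuous_exp.comp (by fun_prop)).mul continuous_const
    · exact (continuous_const.mul ((Real.continuous_exp.comp (by fun_prop)).sub
        (Real.continuous_exp.comp (by fun_prop)))).mul continuous_const
  have hfin' : ∀ u ∈ Set.Icc (0 : ℝ) t,
      Integrable (fun ω => Real.exp (θf u * B 0 ω)) P := fun u hu => hfin u hu
  set G : ℕ → Ω → ℝ≥0∞ := fun j ω => ENNReal.ofReal (Real.exp (θf (U j ω) * B j ω)) with hG
  set H : ℕ → Ω → ℝ≥0∞ := fun n ω => if N ω = n then 1 else 0 with hH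
  set φ : ℝ × ℝ → ℝ≥0∞ := fun p => ENNReal.ofReal (Real.exp (θf p.1 * p.2)) with hφdef
  have hφ : Measurable φ :=
    (ENNReal.continuous_ofReal.comp (Real.continuous_exp.comp
      ((hθc.comp continuous_fst).mul continuous_snd))).measurable
  have hGmeas : ∀ j, Measurable (G j) := fun j =>
    ENNReal.measurable_ofReal.comp (Real.measurable_exp.comp
      ((hθc.measurable.comp (hU j)).mul (hB j)))
  have hHmeas : ∀ n, Measurable (H n) := fun n =>
    measurable_const.ite (hN (measurableSet_singleton n)) measurable_const
  -- the component sigma-algebras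
  set mS : ShotIdx → MeasurableSpace Ω :=
    fun i => MeasurableSpace.comap (shotFam N U B i) (shotTypeMS i) with hmS
  have hmS_le : ∀ i, mS i ≤ ‹MeasurableSpace Ω› := by
    rintro (⟨⟩ | j | j)
    · exact measurable_iff_comap_le.mp hN
    · exact measurable_iff_comap_le.mp (hU j)
    · exact measurable_iff_comap_le.mp (hB j)
  have hHm : ∀ n, Measurable[mS (.inl ())] (H n) := fun n =>
    (measurable_from_top (f := fun k : ℕ => if k = n then (1 : ℝ≥0∞) else 0)).comp
      (Measurable.of_comap_le le_rfl)
  have hGm2 : ∀ j, Measurable[mS (.inr (.inl j)) ⊔ mS (.inr (.inr j))] (G j) := fun j => by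
    have h1 : Measurable[mS (.inr (.inl j)) ⊔ mS (.inr (.inr j))] (U j) :=
      (Measurable.of_comap_le le_rfl).mono le_sup_left le_rfl
    have h2 : Measurable[mS (.inr (.inl j)) ⊔ mS (.inr (.inr j))] (B j) :=
      (Measurable.of_comap_le le_rfl).mono le_sup_right le_rfl
    exact ENNReal.measurable_ofReal.comp (Real.measurable_exp.comp
      ((hθc.measurable.comp h1).mul h2))
  -- factorization of the lintegral
  have key : ∀ n k, ∫⁻ ω, H n ω * ∏ j ∈ Finset.range k, G j ω ∂P
      = (∫⁻ ω, H n ω ∂P) * ∏ j ∈ Finset.range k, ∫⁻ ω, G j ω ∂P := by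
    intro n k
    induction k with
    | zero => simp
    | succ k ih =>
      set Sk : Set ShotIdx :=
        insert (Sum.inl ())
          {i | ∃ j, j < k ∧ (i = Sum.inr (Sum.inl j) ∨ i = Sum.inr (Sum.inr j))} with hSk
      set Tk : Set ShotIdx := {Sum.inr (Sum.inl k), Sum.inr (Sum.inr k)} with hTk
      have hdisj : Disjoint Sk Tk := by
        rw [Set.disjoint_left]
        rintro i (rfl | ⟨j, hj, rfl | rfl⟩) hiT <;>
          rcases hiT with h | h <;> simp_all <;> omega
      have hindep2 : Indep (⨆ i ∈ Sk, mS i) (⨆ i ∈ Tk, mS i) P :=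
        indep_iSup_of_disjoint hmS_le hIndep.iIndep hdisj
      have hf_meas : Measurable[⨆ i ∈ Sk, mS i]
          fun ω => H n ω * ∏ j ∈ Finset.range k, G j ω := by
        refine Measurable.mul ?_ ?_
        · exact (hHm n).mono (le_biSup mS (Set.mem_insert _ _)) le_rfl
        · refine Finset.measurable_prod _ fun j hj => (hGm2 j).mono ?_ le_rfl
          refine sup_le (le_biSup mS ?_) (le_biSup mS ?_)
          · exact Set.mem_insert_iff.mpr (Or.inr ⟨j, Finset.mem_range.mp hj, Or.inl rfl⟩)
          · exact Set.mem_insert_iff.mpr (Or.inr ⟨j, Finset.mem_range.mp hj, Or.inr rfl⟩)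
      have hg_meas : Measurable[⨆ i ∈ Tk, mS i] (G k) := by
        refine (hGm2 k).mono (sup_le (le_biSup mS ?_) (le_biSup mS ?_)) le_rfl
        · exact Set.mem_insert _ _
        · exact Set.mem_insert_iff.mpr (Or.inr rfl)
      have hstep := lintegral_mul_eq_lintegral_mul_lintegral_of_independent_measurableSpace
        (μ := P) (iSup₂_le fun i _ => hmS_le i) (iSup₂_le fun i _ => hmS_le i)
        hindep2 hf_meas hg_meas
      simp only [Finset.prod_range_succ, ← mul_assoc]
      rw [hstep, ih]
  -- Poisson weights
  set R : ℝ≥0 := (lam * t).toNNReal with hR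
  have hRcoe : (R : ℝ) = lam * t := Real.coe_toNNReal _ (mul_pos hlam ht).le
  have hHint : ∀ n, ∫⁻ ω, H n ω ∂P = ENNReal.ofReal (poissonPMFReal R n) := by
    intro n
    have h1 : H n = (N ⁻¹' {n}).indicator (1 : Ω → ℝ≥0∞) := by
      funext ω; by_cases h : N ω = n <;> simp [hH, h, Set.indicator_apply]
    rw [h1, lintegral_indicator_one (hN (measurableSet_singleton n)),
      ← Measure.map_apply hN (measurableSet_singleton n), hNdist,
      poissonMeasure_singleton]
    rfl
  -- the common factor for each shot
  haveI hPB : IsProbabilityMeasure (Measure.map (B 0) P) :=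
    Measure.isProbabilityMeasure_map (hB 0).aemeasurable
  set μB : Measure ℝ := Measure.map (B 0) P with hμB
  set inner : ℝ → ℝ≥0∞ :=
    fun u => ∫⁻ b, ENNReal.ofReal (Real.exp (θf u * b)) ∂μB with hinnerdef
  have hGint : ∀ j, ∫⁻ ω, G j ω ∂P
      = (ENNReal.ofReal t)⁻¹ * ∫⁻ u in Set.Icc (0:ℝ) t, inner u := by
    intro j
    have hpairm : Measurable fun ω => (U j ω, B j ω) := (hU j).prodMk (hB j)
    have hindUB : IndepFun (U j) (B j) P :=
      hIndep.indepFun (i := Sum.inr (Sum.inl j)) (j := Sum.inr (Sum.inr j)) (by simp)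
    have hmap : Measure.map (fun ω => (U j ω, B j ω)) P
        = (Measure.map (U j) P).prod (Measure.map (B j) P) :=
      (indepFun_iff_map_prod_eq_prod_map_map (hU j).aemeasurable (hB j).aemeasurable).mp hindUB
    calc ∫⁻ ω, G j ω ∂P
        = ∫⁻ p, φ p ∂((Measure.map (U j) P).prod (Measure.map (B j) P)) := by
          rw [← hmap, lintegral_map hφ hpairm]
      _ = ∫⁻ u, inner u ∂((ENNReal.ofReal t)⁻¹ • volume.restrict (Set.Icc (0:ℝ) t)) := by
          rw [hUdist j, hBdist j]
          exact lintegral_prod φ hφ.aemeasurable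
      _ = (ENNReal.ofReal t)⁻¹ * ∫⁻ u in Set.Icc (0:ℝ) t, inner u :=
          lintegral_smul_measure _ _
  have hinnerIcc : ∀ u ∈ Set.Icc (0:ℝ) t,
      inner u = ENNReal.ofReal (mgf (B 0) P (θf u)) := by
    intro u hu
    have h1 : inner u = ∫⁻ ω, ENNReal.ofReal (Real.exp (θf u * B 0 ω)) ∂P := by
      rw [hinnerdef, hμB]
      exact lintegral_map (ENNReal.measurable_ofReal.comp
        (Real.measurable_exp.comp (measurable_const.mul measurable_id))) (hB 0)
    rw [h1, ← ofReal_integral_eq_lintegral_ofReal (hfin' u hu)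
      (Filter.Eventually.of_forall fun ω => (Real.exp_pos _).le)]
    rfl
  -- continuity and integrability of the mgf along the curve
  set F : ℝ → ℝ := fun u => mgf (B 0) P (θf u) with hF
  have hFnon : ∀ u, 0 ≤ F u := fun u => mgf_nonneg
  have hFcont : ContinuousOn F (Set.Icc 0 t) := by
    obtain ⟨u0, hu0, hmax⟩ := isCompact_Icc.exists_isMaxOn (Set.nonempty_Icc.mpr ht.le)
      hθc.continuousOn
    rw [continuousOn_iff_continuous_restrict]
    have hcont : Continuous fun u : Set.Icc (0:ℝ) t => ∫ ω, Real.exp (θf u * B 0 ω) ∂P := by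
      apply continuous_of_dominated (bound := fun ω => 1 + Real.exp (θf u0 * B 0 ω))
      · exact fun u => (Real.measurable_exp.comp
          (measurable_const.mul (hB 0))).aestronglyMeasurable
      · intro u
        refine Filter.Eventually.of_forall fun ω => ?_
        rw [Real.norm_eq_abs, abs_of_pos (Real.exp_pos _)]
        have h1 : θf ↑u * B 0 ω ≤ θf u0 * B 0 ω :=
          mul_le_mul_of_nonneg_right (isMaxOn_iff.mp hmax ↑u u.2) (hBpos 0 ω)
        have h2 : Real.exp (θf ↑u * B 0 ω) ≤ Real.exp (θf u0 * B 0 ω) := Real.exp_le_exp.mpr h1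
        linarith
      · exact (integrable_const 1).add (hfin' u0 hu0)
      · exact Filter.Eventually.of_forall fun ω =>
          Real.continuous_exp.comp ((hθc.comp continuous_subtype_val).mul continuous_const)
    exact hcont
  have hFintOn : IntegrableOn F (Set.Icc 0 t) volume := hFcont.integrableOn_Icc
  set I : ℝ := ∫ u in Set.Icc (0:ℝ) t, F u with hI
  have hInon : 0 ≤ I := setIntegral_nonneg measurableSet_Icc fun u _ => hFnon u
  set mR : ℝ := I / t with hmR
  have hmRnon : 0 ≤ mR := div_nonneg hInon ht.le
  have hlII : ∫⁻ u in Set.Icc (0:ℝ) t, inner u = ENNReal.ofReal I := by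
    rw [setLIntegral_congr_fun measurableSet_Icc
      (fun u hu => hinnerIcc u hu)]
    rw [hI, ofReal_integral_eq_lintegral_ofReal hFintOn
      (Filter.Eventually.of_forall fun u => hFnon u)]
  have hGfin : ∀ j, ∫⁻ ω, G j ω ∂P = ENNReal.ofReal mR := by
    intro j
    rw [hGint j, hlII, hmR, ENNReal.ofReal_div_of_pos ht, div_eq_mul_inv, mul_comm]
  -- the Poisson series
  have heq : ∀ n : ℕ, poissonPMFReal R n * mR ^ n
      = Real.exp (-(R:ℝ)) * (((R:ℝ) * mR) ^ n / n.factorial) := by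
    intro n
    rw [poissonPMFReal, mul_pow]
    ring
  have hexp : HasSum (fun n : ℕ => Real.exp (-(R:ℝ)) * (((R:ℝ) * mR) ^ n / n.factorial))
      (Real.exp (-(R:ℝ)) * Real.exp ((R:ℝ) * mR)) := by
    have h := NormedSpace.expSeries_div_hasSum_exp ((R:ℝ) * mR)
    rw [← Real.exp_eq_exp_ℝ] at h
    exact h.mul_left _
  have hsummable : Summable fun n : ℕ => poissonPMFReal R n * mR ^ n := by
    refine Summable.congr hexp.summable fun n => (heq n).symm
  have htsum : ∑' n : ℕ, poissonPMFReal R n * mR ^ n = Real.exp ((R:ℝ) * mR - (R:ℝ)) := by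
    rw [tsum_congr heq, hexp.tsum_eq, ← Real.exp_add]
    ring_nf
  -- measurability of the integrand
  have hmeas_sum1 : Measurable fun ω =>
      ∑ j ∈ Finset.range (N ω), B j ω * Real.exp (-(r₁ * U j ω)) := by
    have h : Measurable fun p : Ω × ℕ =>
        ∑ j ∈ Finset.range p.2, B j p.1 * Real.exp (-(r₁ * U j p.1)) :=
      measurable_from_prod_countable_left fun n => by
        show Measurable fun ω : Ω => ∑ j ∈ Finset.range n, B j ω * Real.exp (-(r₁ * U j ω))
        exact Finset.measurable_sum _ fun j _ => by fun_prop
    exact h.comp (measurable_id.prodMk hN)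
  have hmeas_sum2 : Measurable fun ω =>
      ∑ j ∈ Finset.range (N ω), B j ω * (r₁ / (r₁ - r₂))
        * (Real.exp (-(r₂ * U j ω)) - Real.exp (-(r₁ * U j ω))) := by
    have h : Measurable fun p : Ω × ℕ =>
        ∑ j ∈ Finset.range p.2, B j p.1 * (r₁ / (r₁ - r₂))
          * (Real.exp (-(r₂ * U j p.1)) - Real.exp (-(r₁ * U j p.1))) :=
      measurable_from_prod_countable_left fun n => by
        show Measurable fun ω : Ω => ∑ j ∈ Finset.range n, B j ω * (r₁ / (r₁ - r₂))
          * (Real.exp (-(r₂ * U j ω)) - Real.exp (-(r₁ * U j ω)))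
        exact Finset.measurable_sum _ fun j _ => by fun_prop
    exact h.comp (measurable_id.prodMk hN)
  have hmeasf : Measurable fun ω =>
      Real.exp (θ₁ * ∑ j ∈ Finset.range (N ω), B j ω * Real.exp (-(r₁ * U j ω))
        + θ₂ * ∑ j ∈ Finset.range (N ω), B j ω * (r₁ / (r₁ - r₂))
            * (Real.exp (-(r₂ * U j ω)) - Real.exp (-(r₁ * U j ω)))) :=
    Real.measurable_exp.comp
      ((measurable_const.mul hmeas_sum1).add (measurable_const.mul hmeas_sum2))
  -- pointwise identity
  have hpoint : ∀ ω, ENNReal.ofReal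
      (Real.exp (θ₁ * ∑ j ∈ Finset.range (N ω), B j ω * Real.exp (-(r₁ * U j ω))
        + θ₂ * ∑ j ∈ Finset.range (N ω), B j ω * (r₁ / (r₁ - r₂))
            * (Real.exp (-(r₂ * U j ω)) - Real.exp (-(r₁ * U j ω)))))
      = ∑' n, H n ω * ∏ j ∈ Finset.range n, G j ω := by
    intro ω
    rw [tsum_eq_single (N ω) (fun n hn => by simp [hH, Ne.symm hn])]
    have h1 : θ₁ * (∑ j ∈ Finset.range (N ω), B j ω * Real.exp (-(r₁ * U j ω)))
        + θ₂ * ∑ j ∈ Finset.range (N ω), B j ω * (r₁ / (r₁ - r₂))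
            * (Real.exp (-(r₂ * U j ω)) - Real.exp (-(r₁ * U j ω)))
        = ∑ j ∈ Finset.range (N ω), θf (U j ω) * B j ω := by
      rw [Finset.mul_sum, Finset.mul_sum, ← Finset.sum_add_distrib]
      refine Finset.sum_congr rfl fun j _ => ?_
      simp only [hθf]
      ring
    rw [h1, Real.exp_sum, ENNReal.ofReal_prod_of_nonneg fun j _ => (Real.exp_pos _).le]
    simp [hH, hG]
  -- the lintegral chain
  have hchain : (∫⁻ ω, ENNReal.ofReal
      (Real.exp (θ₁ * ∑ j ∈ Finset.range (N ω), B j ω * Real.exp (-(r₁ * U j ω))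
        + θ₂ * ∑ j ∈ Finset.range (N ω), B j ω * (r₁ / (r₁ - r₂))
            * (Real.exp (-(r₂ * U j ω)) - Real.exp (-(r₁ * U j ω))))) ∂P)
      = ENNReal.ofReal (Real.exp ((R:ℝ) * mR - (R:ℝ))) := by
    calc (∫⁻ ω, ENNReal.ofReal
        (Real.exp (θ₁ * ∑ j ∈ Finset.range (N ω), B j ω * Real.exp (-(r₁ * U j ω))
          + θ₂ * ∑ j ∈ Finset.range (N ω), B j ω * (r₁ / (r₁ - r₂))
              * (Real.exp (-(r₂ * U j ω)) - Real.exp (-(r₁ * U j ω))))) ∂P)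
        = ∫⁻ ω, ∑' n, H n ω * ∏ j ∈ Finset.range n, G j ω ∂P := lintegral_congr hpoint
      _ = ∑' n, ∫⁻ ω, H n ω * ∏ j ∈ Finset.range n, G j ω ∂P :=
          lintegral_tsum fun n => ((hHmeas n).mul
            (Finset.measurable_prod _ fun j _ => hGmeas j)).aemeasurable
      _ = ∑' n : ℕ, ENNReal.ofReal (poissonPMFReal R n) * ENNReal.ofReal mR ^ n := by
          refine tsum_congr fun n => ?_
          rw [key n n, hHint n, Finset.prod_congr rfl fun j _ => hGfin j,
            Finset.prod_const, Finset.card_range]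
      _ = ∑' n : ℕ, ENNReal.ofReal (poissonPMFReal R n * mR ^ n) := by
          refine tsum_congr fun n => ?_
          rw [← ENNReal.ofReal_pow hmRnon, ← ENNReal.ofReal_mul poissonPMFReal_nonneg]
      _ = ENNReal.ofReal (∑' n : ℕ, poissonPMFReal R n * mR ^ n) :=
          (ENNReal.ofReal_tsum_of_nonneg
            (fun n => mul_nonneg poissonPMFReal_nonneg (pow_nonneg hmRnon n)) hsummable).symm
      _ = ENNReal.ofReal (Real.exp ((R:ℝ) * mR - (R:ℝ))) := by rw [htsum]
  -- put everything together
  rw [integral_eq_lintegral_of_nonneg_ae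
    (Filter.Eventually.of_forall fun ω => (Real.exp_pos _).le) hmeasf.aestronglyMeasurable,
    hchain, ENNReal.toReal_ofReal (Real.exp_pos _).le]
  congr 1
  have hone : IntegrableOn (fun _ : ℝ => (1:ℝ)) (Set.Icc (0:ℝ) t) volume := by
    refine (integrableOn_const_iff (C := (1:ℝ))).mpr (Or.inr ?_)
    rw [Real.volume_Icc]
    exact ENNReal.ofReal_lt_top
  have hsub : (∫ u in Set.Icc (0:ℝ) t, (F u - 1)) = I - t := by
    rw [integral_sub hFintOn hone, hI]
    congr 1
    rw [setIntegral_const, Real.volume_real_Icc_of_le (by linarith), smul_eq_mul]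
    ring
  have hshow : (∫ u in Set.Icc (0:ℝ) t,
      (mgf (B 0) P (Real.exp (-(r₁ * u)) * θ₁
        + r₁ / (r₁ - r₂) * (Real.exp (-(r₂ * u)) - Real.exp (-(r₁ * u))) * θ₂) - 1))
      = ∫ u in Set.Icc (0:ℝ) t, (F u - 1) := rfl
  rw [hshow, hsub, hRcoe, hmR]
  field_simp

end
end

section
/- Differentiation rule for Kronecker products with an identity factor on the right: if A: ℝ^L → ℝ^{n_1×n_2} is differentiable and q ∈ ℕ, then ∇(A(θ) ⊗ I_q) = (K_{n_1,q} ⊗ I_L) ( I_q ⊗ ∇A(θ) ) K_{q,n_2}, where K_{m,n} := Σ_{i=1}^m Σ_{j=1}^n ( H_{ij} ⊗ H_{ij}^T ) is the commutation matrix, H_{ij} ∈ ℝ^{m×n} being the matrix with a 1 in position (i,j) and zeros elsewhere. -/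
open Matrix
open scoped Kronecker

noncomputable section

/-- The stacked-gradient operator on matrix-valued maps: for `f : ℝ^L → ℝ^{n₁×n₂}`, `∇f` is the
`(n₁ × L) × n₂` matrix whose row `(i, k)` and column `j` entry is `∂f_{ij}/∂θ_k`. -/
def mgrad {L : ℕ} {n₁ n₂ : Type*} (f : (Fin L → ℝ) → Matrix n₁ n₂ ℝ)
    (θ : Fin L → ℝ) : Matrix (n₁ × Fin L) n₂ ℝ :=
  Matrix.of fun ik j => fderiv ℝ (fun x => f x ik.1 j) θ (Pi.single ik.2 1)

/-- The commutation matrix `K_{m,n} = ∑_i ∑_j H_{ij} ⊗ H_{ij}ᵀ`, where `H_{ij}` has a `1` in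
position `(i,j)` and zeros elsewhere. -/
def commMat (m n : Type*) [Fintype m] [Fintype n] [DecidableEq m] [DecidableEq n] :
    Matrix (m × n) (n × m) ℝ :=
  ∑ i : m, ∑ j : n,
    (Matrix.single i j (1 : ℝ)) ⊗ₖ (Matrix.single i j (1 : ℝ))ᵀ

lemma commMat_apply (m n : Type*) [Fintype m] [Fintype n] [DecidableEq m] [DecidableEq n]
    (a : m) (b : n) (c : n) (d : m) :
    commMat m n (a, b) (c, d) = if a = d ∧ b = c then 1 else 0 := by
  simp [commMat, Matrix.sum_apply, kroneckerMap_apply, Matrix.single, Matrix.transpose_apply,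
    ite_and, Finset.sum_ite_eq, Finset.sum_ite_eq']
  aesop

/-- **Differentiation rule for Kronecker products with an identity factor on the right**: if
`A : ℝ^L → ℝ^{n₁×n₂}` is differentiable and `q ∈ ℕ`, then
`∇(A ⊗ I_q) = (K_{n₁,q} ⊗ I_L) (I_q ⊗ ∇A) K_{q,n₂}` (with the canonical associativity
identification of the row index of the middle factor). -/
theorem mgrad_kronecker_id {L n₁ n₂ q : ℕ}
    (A : (Fin L → ℝ) → Matrix (Fin n₁) (Fin n₂) ℝ)
    (hA : ∀ i j, Differentiable ℝ fun θ => A θ i j)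
    (θ : Fin L → ℝ) :
    mgrad (fun x => A x ⊗ₖ (1 : Matrix (Fin q) (Fin q) ℝ)) θ
      = (commMat (Fin n₁) (Fin q) ⊗ₖ (1 : Matrix (Fin L) (Fin L) ℝ))
        * (Matrix.reindex (Equiv.prodAssoc (Fin q) (Fin n₁) (Fin L)).symm (Equiv.refl _)
            ((1 : Matrix (Fin q) (Fin q) ℝ) ⊗ₖ mgrad A θ))
        * commMat (Fin q) (Fin n₂) := by
  ext ⟨⟨i, s⟩, k⟩ ⟨j, t⟩
  have hlhs : mgrad (fun x => A x ⊗ₖ (1 : Matrix (Fin q) (Fin q) ℝ)) θ ((i, s), k) (j, t)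
      = (if s = t then (1:ℝ) else 0) * mgrad A θ (i, k) j := by
    simp only [mgrad, Matrix.of_apply, kroneckerMap_apply, Matrix.one_apply]
    by_cases hst : s = t
    · simp [hst]
    · simp [hst]
  rw [hlhs]
  simp only [Matrix.mul_apply, Fintype.sum_prod_type, kroneckerMap_apply,
    Matrix.reindex_apply, Matrix.submatrix_apply, Equiv.symm_symm, Equiv.refl_symm,
    Equiv.prodAssoc_apply, Equiv.refl_apply, commMat_apply, Matrix.one_apply]
  simp only [mul_ite, mul_one, mul_zero, ite_mul, one_mul, zero_mul,
    Finset.sum_ite_eq, Finset.sum_ite_eq', Finset.mem_univ, if_true, ite_and]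
  simp [eq_comm]

end
end

section
/- First-moment ODE from the transform PDE: under the stated hypotheses, the map z_1(t) := ∇_θ Ξ(0, t) ∈ ℝ^{dL} satisfies z_1'(t) = (Λ ⊗ I_L) ∇B(0) π(t) + ( (Q^T ⊗ I_L) − R^T ) z_1(t), where π(t) := Ξ(0, t) ∈ ℝ^d. -/
open Matrix
open scoped Kronecker

noncomputable section

/-- The matrix `I_d ⊗ θᵀ : ℝ^{d × dL}` (with row index `j` and column index `(j',k)`, its entry
is `δ_{jj'} θ_k`). -/
def idKronRowVec (d : ℕ) {L : ℕ} (θ : Fin L → ℝ) : Matrix (Fin d) (Fin d × Fin L) ℝ :=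
  Matrix.of fun j p => if j = p.1 then θ p.2 else 0

private lemma sum_ite_irrel' {α : Type*} [Fintype α] (c : Prop) [Decidable c] (f : α → ℝ) :
    (∑ x : α, if c then f x else 0) = if c then ∑ x : α, f x else 0 := by
  split <;> simp

/-- **First-moment ODE from the transform PDE.** Suppose `Ξ : ℝ^L × [0,∞) → ℝ^d` is `C²` and
satisfies `∂_t Ξ(θ,t) = Λ(B(θ) - I_d)Ξ(θ,t) + Qᵀ Ξ(θ,t) - (I_d ⊗ θᵀ) Rᵀ ∇_θ Ξ(θ,t)`, where
`Λ = diag(λ)`, `B(θ) = diag(β_j(θ))`, `Q` is a Markov generator and `R` is the block-diagonal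
matrix with blocks `R_1,…,R_d`. Then `z₁(t) := ∇_θ Ξ(0,t)` satisfies
`z₁'(t) = (Λ ⊗ I_L) ∇B(0) π(t) + ((Qᵀ ⊗ I_L) - Rᵀ) z₁(t)` with `π(t) = Ξ(0,t)`. -/
theorem first_moment_ode {d L : ℕ}
    (Q : Matrix (Fin d) (Fin d) ℝ)
    (hQoff : ∀ i j, i ≠ j → 0 ≤ Q i j) (hQrow : ∀ i, ∑ j, Q i j = 0)
    (lam : Fin d → ℝ) (hlam : ∀ j, 0 ≤ lam j)
    (β : Fin d → (Fin L → ℝ) → ℝ)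
    (hβ : ∀ j, ContDiff ℝ 2 (β j)) (hβ0 : ∀ j, β j 0 = 1)
    (Λ : Matrix (Fin d) (Fin d) ℝ) (hΛ : Λ = Matrix.diagonal lam)
    (Bm : (Fin L → ℝ) → Matrix (Fin d) (Fin d) ℝ)
    (hBm : Bm = fun θ => Matrix.diagonal fun j => β j θ)
    (Rb : Fin d → Matrix (Fin L) (Fin L) ℝ)
    (R : Matrix (Fin d × Fin L) (Fin d × Fin L) ℝ)
    (hR : R = Matrix.of fun p q => if p.1 = q.1 then Rb p.1 p.2 q.2 else 0)
    (Ξ : (Fin L → ℝ) → ℝ → Fin d → ℝ)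
    (hΞ : ContDiff ℝ 2 fun p : (Fin L → ℝ) × ℝ => Ξ p.1 p.2)
    -- `∇_θ Ξ(θ, s)`, as a vector indexed by `Fin d × Fin L`
    (gradΞ : (Fin L → ℝ) → ℝ → Fin d × Fin L → ℝ)
    (hgradΞ : gradΞ = fun θ s p => fderiv ℝ (fun x => Ξ x s p.1) θ (Pi.single p.2 1))
    -- the PDE, in `t ∈ [0,∞)`
    (hPDE : ∀ θ : Fin L → ℝ, ∀ s ∈ Set.Ici (0 : ℝ),
      HasDerivWithinAt (fun u => Ξ θ u)
        ((Λ * (Bm θ - 1)) *ᵥ Ξ θ s + Qᵀ *ᵥ Ξ θ s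
          - idKronRowVec d θ *ᵥ (Rᵀ *ᵥ gradΞ θ s))
        (Set.Ici 0) s)
    (z₁ : ℝ → Fin d × Fin L → ℝ) (hz₁ : z₁ = fun s => gradΞ 0 s) :
    ∀ s ∈ Set.Ici (0 : ℝ),
      HasDerivWithinAt z₁
        (((Λ ⊗ₖ (1 : Matrix (Fin L) (Fin L) ℝ)) * mgrad Bm 0) *ᵥ Ξ 0 s
          + ((Qᵀ ⊗ₖ (1 : Matrix (Fin L) (Fin L) ℝ)) - Rᵀ) *ᵥ z₁ s)
        (Set.Ici 0) s := by
  classical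
  -- componentwise function
  set g : Fin d → ((Fin L → ℝ) × ℝ) → ℝ := fun j q => Ξ q.1 q.2 j with hgdef
  have hg : ∀ j, ContDiff ℝ 2 (g j) := fun j => contDiff_pi.mp hΞ j
  have hgd : ∀ j x, DifferentiableAt ℝ (g j) x :=
    fun j x => ((hg j).differentiable two_ne_zero).differentiableAt
  -- step 1 : gradΞ as directional derivative of g
  have h1 : ∀ (θ : Fin L → ℝ) (u : ℝ) (p : Fin d × Fin L),
      gradΞ θ u p = fderiv ℝ (g p.1) (θ, u) (Pi.single p.2 1, 0) := by
    intro θ u p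
    rw [hgradΞ]
    show (fderiv ℝ (fun x => Ξ x u p.1) θ) (Pi.single p.2 1) = _
    have hcomp : (fun x => Ξ x u p.1) = (g p.1) ∘ (fun x : Fin L → ℝ => (x, u)) := rfl
    rw [hcomp, fderiv_comp (𝕜 := ℝ) θ (hgd p.1 (θ, u)) ((hasFDerivAt_prodMk_left θ u).differentiableAt),
      (hasFDerivAt_prodMk_left θ u).fderiv]
    simp
  -- φ p q = directional θ-derivative of g at q
  set φ : (Fin d × Fin L) → ((Fin L → ℝ) × ℝ) → ℝ :=
    fun p q => fderiv ℝ (g p.1) q ((Pi.single p.2 1 : Fin L → ℝ), (0 : ℝ)) with hφdef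
  have hφ : ∀ p, ContDiff ℝ 1 (φ p) := fun p =>
    ((hg p.1).fderiv_right (m := 1) (by norm_num)).clm_apply contDiff_const
  have hφd : ∀ p x, DifferentiableAt ℝ (φ p) x :=
    fun p x => ((hφ p).differentiable one_ne_zero).differentiableAt
  have hz₁φ : ∀ u p, z₁ u p = φ p (0, u) := by
    intro u p; rw [hz₁]; exact h1 0 u p
  -- derivative of z₁
  set D : ℝ → Fin d × Fin L → ℝ :=
    fun u p => fderiv ℝ (φ p) (0, u) ((0 : Fin L → ℝ), (1 : ℝ)) with hDdef
  have hcurve : ∀ u : ℝ, HasDerivAt (fun v : ℝ => ((0 : Fin L → ℝ), v))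
      ((0 : Fin L → ℝ), (1 : ℝ)) u :=
    fun u => (hasDerivAt_const u (0 : Fin L → ℝ)).prodMk (hasDerivAt_id u)
  have hz₁deriv : ∀ u, HasDerivAt z₁ (D u) u := by
    intro u
    apply hasDerivAt_pi.2
    intro p
    have h2 : HasDerivAt (fun v => φ p (0, v)) (fderiv ℝ (φ p) (0, u) (0, 1)) u :=
      ((hφd p (0, u)).hasFDerivAt).comp_hasDerivAt u (hcurve u)
    have hfun : (fun v => z₁ v p) = fun v => φ p (0, v) := funext fun v => hz₁φ v p
    rw [hfun]
    exact h2
  -- the scalar form of the PDE right-hand side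
  set F : Fin d → ((Fin L → ℝ) × ℝ) → ℝ := fun j q =>
    lam j * ((β j q.1 - 1) * Ξ q.1 q.2 j) + (∑ j', Q j' j * Ξ q.1 q.2 j')
      - ∑ k', q.1 k' * (∑ p', R p' (j, k') * φ p' q) with hFdef
  -- step 4 : for q.2 > 0, the time derivative of g equals F
  have hψeq : ∀ (j : Fin d) (q : (Fin L → ℝ) × ℝ), 0 < q.2 →
      fderiv ℝ (g j) q ((0 : Fin L → ℝ), (1 : ℝ)) = F j q := by
    intro j q hq
    have hda := (hPDE q.1 q.2 hq.le).hasDerivAt (Ici_mem_nhds hq)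
    have hj : HasDerivAt (fun v => Ξ q.1 v j)
        (((Λ * (Bm q.1 - 1)) *ᵥ Ξ q.1 q.2 + Qᵀ *ᵥ Ξ q.1 q.2
          - idKronRowVec d q.1 *ᵥ (Rᵀ *ᵥ gradΞ q.1 q.2) : Fin d → ℝ) j) q.2 :=
      hasDerivAt_pi.1 hda j
    have h2 : HasDerivAt (fun v => Ξ q.1 v j)
        (fderiv ℝ (g j) q ((0 : Fin L → ℝ), (1 : ℝ))) q.2 :=
      ((hgd j (q.1, q.2)).hasFDerivAt).comp_hasDerivAt q.2
        ((hasDerivAt_const q.2 q.1).prodMk (hasDerivAt_id' q.2))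
    rw [h2.unique hj]
    have hφg : ∀ p', φ p' q = gradΞ q.1 q.2 p' := fun p' => (h1 q.1 q.2 p').symm
    simp only [hFdef, hφg, hΛ, hBm, idKronRowVec, Pi.add_apply, Pi.sub_apply,
      Matrix.mulVec, dotProduct, Matrix.mul_apply, Matrix.diagonal_apply,
      Matrix.sub_apply, Matrix.one_apply, Matrix.transpose_apply, Matrix.of_apply,
      Fintype.sum_prod_type, ite_mul, zero_mul, mul_ite, mul_zero,
      Finset.sum_ite_eq, Finset.sum_ite_eq', Finset.mem_univ, if_true]
    simp only [mul_sub, sub_mul, mul_ite, mul_zero, mul_one, ite_mul, zero_mul,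
      Finset.sum_sub_distrib, Finset.sum_ite_eq, Finset.mem_univ, if_true]
    rw [Finset.sum_comm]
    simp only [Finset.sum_ite_eq, Finset.mem_univ, if_true]
    ring
  -- symmetry of second derivatives
  have hsym : ∀ (p : Fin d × Fin L) (x : (Fin L → ℝ) × ℝ),
      fderiv ℝ (φ p) x ((0 : Fin L → ℝ), (1 : ℝ))
        = fderiv ℝ (fun q => fderiv ℝ (g p.1) q ((0 : Fin L → ℝ), (1 : ℝ))) x
            ((Pi.single p.2 1 : Fin L → ℝ), (0 : ℝ)) := by
    intro p x
    have hc : DifferentiableAt ℝ (fderiv ℝ (g p.1)) x :=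
      (((hg p.1).fderiv_right (m := 1) (by norm_num)).differentiable one_ne_zero).differentiableAt
    rw [hφdef]
    rw [fderiv_clm_apply hc (differentiableAt_const _),
      fderiv_clm_apply hc (differentiableAt_const _)]
    simp only [fderiv_fun_const, Pi.zero_apply, ContinuousLinearMap.comp_zero, zero_add,
      ContinuousLinearMap.add_apply, ContinuousLinearMap.flip_apply,
      ContinuousLinearMap.zero_apply]
    exact ((hg p.1).contDiffAt.isSymmSndFDerivAt (by simp [minSmoothness_of_isRCLikeNormedField])) _ _
  -- the target right-hand side
  set RHS : ℝ → Fin d × Fin L → ℝ := fun u =>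
    ((Λ ⊗ₖ (1 : Matrix (Fin L) (Fin L) ℝ)) * mgrad Bm 0) *ᵥ Ξ 0 u
      + ((Qᵀ ⊗ₖ (1 : Matrix (Fin L) (Fin L) ℝ)) - Rᵀ) *ᵥ z₁ u with hRHSdef
  -- step 5 : for u > 0, D u = RHS u
  have hmg : ∀ (a b : Fin d) (c : Fin L),
      mgrad Bm 0 (a, c) b = if a = b then fderiv ℝ (β a) 0 (Pi.single c 1) else 0 := by
    intro a b c
    by_cases h : a = b
    · subst h
      simp [mgrad, hBm, Matrix.diagonal_apply_eq]
    · simp only [mgrad, hBm, Matrix.of_apply, if_neg h]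
      have : (fun x : Fin L → ℝ => Matrix.diagonal (fun i => β i x) a b) = fun _ => 0 := by
        funext x
        exact Matrix.diagonal_apply_ne _ h
      rw [this, fderiv_fun_const]
      simp
  have hDRHS : ∀ u : ℝ, 0 < u → D u = RHS u := by
    intro u hu
    funext p
    obtain ⟨j, k⟩ := p
    set x : (Fin L → ℝ) × ℝ := ((0 : Fin L → ℝ), u) with hxdef
    -- eventual equality near x
    have hev : (fun q => fderiv ℝ (g j) q ((0 : Fin L → ℝ), (1 : ℝ))) =ᶠ[nhds x] F j := by
      have hopen : IsOpen {q : (Fin L → ℝ) × ℝ | 0 < q.2} :=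
        isOpen_lt continuous_const continuous_snd
      filter_upwards [hopen.mem_nhds (by simpa [hxdef] using hu)] with q hq
      exact hψeq j q hq
    have hfd : fderiv ℝ (fun q => fderiv ℝ (g j) q ((0 : Fin L → ℝ), (1 : ℝ))) x
        = fderiv ℝ (F j) x := hev.fderiv_eq
    -- derivative of F j at x
    have hβfd : HasFDerivAt (fun q : (Fin L → ℝ) × ℝ => β j q.1)
        ((fderiv ℝ (β j) 0).comp (ContinuousLinearMap.fst ℝ (Fin L → ℝ) ℝ)) x :=
      (((hβ j).differentiable two_ne_zero 0).hasFDerivAt).comp x hasFDerivAt_fst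
    have h_t1 := (((hβfd.sub_const 1).fun_mul (hgd j x).hasFDerivAt)).const_mul (lam j)
    have h_t2 := HasFDerivAt.fun_sum (fun j' (_ : j' ∈ Finset.univ) =>
      ((hgd j' x).hasFDerivAt.const_mul (Q j' j)))
    have h_W : ∀ k' : Fin L, HasFDerivAt (fun q => ∑ p', R p' (j, k') * φ p' q)
        (∑ p', R p' (j, k') • fderiv ℝ (φ p') x) x :=
      fun k' => HasFDerivAt.fun_sum (fun p' (_ : p' ∈ Finset.univ) =>
        ((hφd p' x).hasFDerivAt.const_mul (R p' (j, k'))))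
    have hcoord : ∀ k' : Fin L, HasFDerivAt (fun q : (Fin L → ℝ) × ℝ => q.1 k')
        ((ContinuousLinearMap.proj k').comp (ContinuousLinearMap.fst ℝ (Fin L → ℝ) ℝ)) x :=
      fun k' => ((ContinuousLinearMap.proj k').comp
        (ContinuousLinearMap.fst ℝ (Fin L → ℝ) ℝ)).hasFDerivAt
    have h_t3 := HasFDerivAt.fun_sum (fun k' (_ : k' ∈ Finset.univ) => (hcoord k').fun_mul (h_W k'))
    have h_F : HasFDerivAt (F j) _ x := (h_t1.fun_add h_t2).fun_sub h_t3
    have hF' := h_F.fderiv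
    -- compute RHS component
    have hRHSval : RHS u (j, k)
        = lam j * (fderiv ℝ (β j) 0 (Pi.single k 1) * Ξ 0 u j)
          + ∑ j', Q j' j * z₁ u (j', k) - ∑ p', R p' (j, k) * z₁ u p' := by
      rw [hRHSdef]
      simp only [Pi.add_apply, Matrix.mulVec, dotProduct, Matrix.mul_apply,
        Matrix.kroneckerMap_apply, hΛ, Matrix.diagonal_apply, Matrix.one_apply,
        Matrix.sub_apply, Matrix.transpose_apply, Fintype.sum_prod_type, hmg,
        ite_mul, zero_mul, mul_ite, mul_zero, mul_one,
        Finset.sum_ite_eq, Finset.sum_ite_eq', Finset.mem_univ, if_true,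
        sum_ite_irrel', Finset.sum_sub_distrib, sub_mul]
      ring
    rw [hRHSval]
    calc D u (j, k) = fderiv ℝ (fun q => fderiv ℝ (g j) q ((0 : Fin L → ℝ), (1 : ℝ))) x
          ((Pi.single k 1 : Fin L → ℝ), (0 : ℝ)) := hsym (j, k) x
      _ = fderiv ℝ (F j) x ((Pi.single k 1 : Fin L → ℝ), (0 : ℝ)) := by rw [hfd]
      _ = _ := by
          rw [hF']
          simp only [ContinuousLinearMap.add_apply, ContinuousLinearMap.sub_apply,
            ContinuousLinearMap.smul_apply, ContinuousLinearMap.comp_apply,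
            ContinuousLinearMap.coe_sum', Finset.sum_apply,
            ContinuousLinearMap.coe_fst', ContinuousLinearMap.proj_apply,
            smul_eq_mul, hβ0]
          have e1 : ∀ a : Fin d, (fderiv ℝ (g a) x) (Pi.single k 1, 0) = z₁ u (a, k) :=
            fun a => (hz₁φ u (a, k)).symm
          have e2 : ∀ p' : Fin d × Fin L, φ p' x = z₁ u p' := fun p' => (hz₁φ u p').symm
          have e3 : g j x = Ξ 0 u j := rfl
          have e0 : x.1 = 0 := rfl
          simp only [e0, hβ0, e1, e2, e3, Pi.zero_apply, zero_mul, zero_add, mul_zero, mul_one,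
            sub_self, sub_zero, Pi.single_apply, mul_ite, ite_mul, Finset.sum_ite_eq',
            Finset.mem_univ, if_true]
          ring
  -- continuity
  have hDcont : Continuous D := by
    apply continuous_pi
    intro p
    exact ((ContinuousLinearMap.apply ℝ ℝ ((0 : Fin L → ℝ), (1 : ℝ))).continuous).comp
      (((hφ p).continuous_fderiv one_ne_zero).comp (continuous_const.prodMk continuous_id))
  have hΞcont : Continuous fun u : ℝ => Ξ 0 u :=
    hΞ.continuous.comp (continuous_const.prodMk continuous_id)
  have hz₁cont : Continuous z₁ := by
    apply continuous_pi
    intro p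
    have : Continuous fun u : ℝ => φ p (0, u) :=
      (hφ p).continuous.comp (continuous_const.prodMk continuous_id)
    simpa [funext fun u => hz₁φ u p] using this
  have hRHScont : Continuous RHS := by
    rw [hRHSdef]
    apply Continuous.add
    · exact (Matrix.mulVecLin _).continuous_of_finiteDimensional.comp hΞcont
    · exact (Matrix.mulVecLin _).continuous_of_finiteDimensional.comp hz₁cont
  -- extend to u = 0 by continuity
  have hDRHS' : ∀ u : ℝ, 0 ≤ u → D u = RHS u := by
    intro u hu
    rcases hu.lt_or_eq with h | h
    · exact hDRHS u h
    · subst h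
      have l1 : Filter.Tendsto D (nhdsWithin 0 (Set.Ioi 0)) (nhds (D 0)) :=
        (hDcont.tendsto 0).mono_left nhdsWithin_le_nhds
      have l2 : Filter.Tendsto RHS (nhdsWithin 0 (Set.Ioi 0)) (nhds (RHS 0)) :=
        (hRHScont.tendsto 0).mono_left nhdsWithin_le_nhds
      have l3 : Filter.Tendsto D (nhdsWithin 0 (Set.Ioi 0)) (nhds (RHS 0)) := by
        refine l2.congr' ?_
        filter_upwards [self_mem_nhdsWithin] with u hu
        exact (hDRHS u hu).symm
      exact tendsto_nhds_unique l1 l3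
  intro s hs
  have := (hz₁deriv s).hasDerivWithinAt (s := Set.Ici (0:ℝ))
  rw [hDRHS' s hs] at this
  exact this


end
end
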